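/- Let r be a positive real number, let D be a Poisson random variable with rate r (i.e., P(D = d) = e^{−r} r^d / d! for d ∈ ℕ), and let C be a natural number with r ≤ C. Then E[min(D, C)] = ∑_{d=0}^{∞} P(D = d) · min(d, C) ≥ r / e. -/

import Mathlib

private lemma tsum_exp_aux (x : ℝ) : ∑' n : ℕ, x ^ n / n.factorial = Real.exp x := by
  rw [Real.exp_eq_exp_ℝ, NormedSpace.exp_eq_tsum_div]

/-- if `D` is Poisson with rate `r ≤ C`, then
`E[min(D, C)] ≥ r / e`. -/
theorem poisson_min_capacity_expectation_ge
    (r : ℝ) (C : ℕ) (hr : 0 < r) (hrC : r ≤ C) :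
    r / Real.exp 1 ≤
      ∑' d : ℕ, (Real.exp (-r) * r ^ d / Nat.factorial d) * min (d : ℝ) C := by
  have hC : (0 : ℝ) < C := lt_of_lt_of_le hr hrC
  set t : ℝ := 1 - 1 / C with ht
  have hC1 : (1 : ℝ) ≤ C := by
    exact_mod_cast Nat.one_le_iff_ne_zero.mpr (Nat.pos_iff_ne_zero.mp (Nat.cast_pos.mp hC))
  have ht0 : 0 ≤ t := by
    have h1 : (1 : ℝ) / C ≤ 1 := by rw [div_le_one hC]; exact hC1
    rw [ht]; linarith
  have hrt : r * t = r - r / C := by rw [ht, mul_sub, mul_one, mul_one_div]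
  -- pointwise bound
  have hpt : ∀ d : ℕ, (C : ℝ) * (Real.exp (-r) * r ^ d / Nat.factorial d) * (1 - t ^ d)
      ≤ (Real.exp (-r) * r ^ d / Nat.factorial d) * min (d : ℝ) C := by
    intro d
    have hp : 0 ≤ Real.exp (-r) * r ^ d / Nat.factorial d := by positivity
    have hber : 1 - (d : ℝ) / C ≤ t ^ d := by
      have h3 : (1:ℝ) / C ≤ 1 := by rw [div_le_one hC]; exact hC1
      have := one_add_mul_le_pow (a := -(1 / (C:ℝ))) (by linarith) d
      have h' : 1 + (d : ℝ) * (-(1 / C)) ≤ t ^ d := by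
        simpa [ht, sub_eq_add_neg] using this
      calc 1 - (d : ℝ) / C = 1 + (d : ℝ) * (-(1 / C)) := by ring
        _ ≤ t ^ d := h'
    have htd : t ^ d ≤ 1 := pow_le_one₀ ht0 (by
      have h2 : (0:ℝ) < 1 / C := by positivity
      rw [ht]; linarith)
    have hmin : (C : ℝ) * (1 - t ^ d) ≤ min (d : ℝ) C := by
      apply le_min
      · have : (C : ℝ) * (1 - t ^ d) ≤ (C : ℝ) * ((d : ℝ) / C) :=
          mul_le_mul_of_nonneg_left (by linarith) hC.le
        calc (C : ℝ) * (1 - t ^ d) ≤ (C : ℝ) * ((d : ℝ) / C) := this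
          _ = (d : ℝ) := by field_simp
      · nlinarith [pow_nonneg ht0 d]
    calc (C : ℝ) * (Real.exp (-r) * r ^ d / Nat.factorial d) * (1 - t ^ d)
        = (Real.exp (-r) * r ^ d / Nat.factorial d) * ((C : ℝ) * (1 - t ^ d)) := by ring
      _ ≤ (Real.exp (-r) * r ^ d / Nat.factorial d) * min (d : ℝ) C :=
          mul_le_mul_of_nonneg_left hmin hp
  -- summability
  have hs1 : Summable (fun d : ℕ => r ^ d / (Nat.factorial d : ℝ)) :=
    Real.summable_pow_div_factorial r
  have hs2 : Summable (fun d : ℕ => (r * t) ^ d / (Nat.factorial d : ℝ)) :=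
    Real.summable_pow_div_factorial (r * t)
  have hsg : Summable (fun d : ℕ =>
      (C : ℝ) * (Real.exp (-r) * r ^ d / Nat.factorial d) * (1 - t ^ d)) := by
    have : (fun d : ℕ => (C : ℝ) * (Real.exp (-r) * r ^ d / Nat.factorial d) * (1 - t ^ d))
        = fun d : ℕ => (C : ℝ) * Real.exp (-r) * (r ^ d / Nat.factorial d)
          - (C : ℝ) * Real.exp (-r) * ((r * t) ^ d / Nat.factorial d) := by
      funext d
      rw [mul_pow]
      ring
    rw [this]
    exact ((hs1.mul_left _).sub (hs2.mul_left _))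
  have hsf : Summable (fun d : ℕ =>
      (Real.exp (-r) * r ^ d / Nat.factorial d) * min (d : ℝ) C) := by
    apply Summable.of_nonneg_of_le (fun d => by positivity)
      (fun d => ?_) ((hs1.mul_left (Real.exp (-r) * C)))
    have hp : 0 ≤ Real.exp (-r) * r ^ d / Nat.factorial d := by positivity
    calc (Real.exp (-r) * r ^ d / Nat.factorial d) * min (d : ℝ) C
        ≤ (Real.exp (-r) * r ^ d / Nat.factorial d) * C :=
          mul_le_mul_of_nonneg_left (min_le_right _ _) hp
      _ = Real.exp (-r) * C * (r ^ d / Nat.factorial d) := by ring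
  -- compare sums
  have hle : ∑' d : ℕ, (C : ℝ) * (Real.exp (-r) * r ^ d / Nat.factorial d) * (1 - t ^ d)
      ≤ ∑' d : ℕ, (Real.exp (-r) * r ^ d / Nat.factorial d) * min (d : ℝ) C :=
    Summable.tsum_le_tsum hpt hsg hsf
  -- compute the lower sum
  have hsum : ∑' d : ℕ, (C : ℝ) * (Real.exp (-r) * r ^ d / Nat.factorial d) * (1 - t ^ d)
      = (C : ℝ) * (1 - Real.exp (-(r / C))) := by
    have heq : (fun d : ℕ => (C : ℝ) * (Real.exp (-r) * r ^ d / Nat.factorial d) * (1 - t ^ d))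
        = fun d : ℕ => (C : ℝ) * Real.exp (-r) * (r ^ d / Nat.factorial d)
          - (C : ℝ) * Real.exp (-r) * ((r * t) ^ d / Nat.factorial d) := by
      funext d
      rw [mul_pow]
      ring
    rw [heq, Summable.tsum_sub (hs1.mul_left _) (hs2.mul_left _), tsum_mul_left, tsum_mul_left,
      tsum_exp_aux, tsum_exp_aux]
    have e1 : Real.exp (-r) * Real.exp r = 1 := by
      rw [← Real.exp_add]; simp
    have e2 : Real.exp (-r) * Real.exp (r * t) = Real.exp (-(r / C)) := by
      rw [← Real.exp_add]
      congr 1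
      rw [hrt]; ring
    linear_combination (C : ℝ) * e1 - (C : ℝ) * e2
  rw [hsum] at hle
  refine le_trans ?_ hle
  -- analytic step: r / e ≤ C (1 - exp(-(r/C)))
  set x : ℝ := r / C with hx
  have hx0 : 0 ≤ x := by positivity
  have hx1 : x ≤ 1 := by rw [hx, div_le_one hC]; exact hrC
  have hconv : Real.exp (-x) ≤ (1 - x) * 1 + x * Real.exp (-1) := by
    have := convexOn_exp.2 (Set.mem_univ (0 : ℝ)) (Set.mem_univ (-1 : ℝ))
      (by linarith : (0:ℝ) ≤ 1 - x) hx0 (by ring)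
    simpa [Real.exp_zero, smul_eq_mul] using this
  have hE : Real.exp (-1) = 1 / Real.exp 1 := by
    rw [Real.exp_neg]; ring
  have hEpos : 0 < Real.exp 1 := Real.exp_pos 1
  have hE2 : Real.exp 1 ≥ 2 := by
    have := Real.add_one_le_exp (1 : ℝ)
    linarith
  have key : x / Real.exp 1 ≤ 1 - Real.exp (-x) := by
    rw [hE] at hconv
    have h1 : Real.exp (-x) ≤ 1 - x + x / Real.exp 1 := by
      have : x * (1 / Real.exp 1) = x / Real.exp 1 := by ring
      linarith [hconv, this.le]
    have h2 : x / Real.exp 1 ≤ x / 2 := by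
      apply div_le_div_of_nonneg_left hx0 (by norm_num) hE2
    linarith
  calc r / Real.exp 1 = (C : ℝ) * (x / Real.exp 1) := by
        rw [hx]; field_simp
    _ ≤ (C : ℝ) * (1 - Real.exp (-x)) := mul_le_mul_of_nonneg_left key hC.le
    _ = (C : ℝ) * (1 - Real.exp (-(r / C))) := by rw [hx]
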